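/- Let k ≥ 1, let R > 1, and let f, f̃ : [0,∞)^k → ℝ be functions supported on the simplex Δ_k(1) and satisfying f(0, t_2, ..., t_k) = f̃(0, t_2, ..., t_k) for all (t_2, ..., t_k) ∈ [0,∞)^{k-1}. For a tuple d = (d_1, ..., d_k) of positive integers set λ_d := μ(d_1)···μ(d_k)·f(log d_1/log R, ..., log d_k/log R) and λ̃_d := μ(d_1)···μ(d_k)·f̃(log d_1/log R, ..., log d_k/log R). Let h_1, ..., h_k be integers and let n be a positive integer such that n + h_1 is a prime strictly greater than R. Then ∑_{d : d_i | n + h_i for all i} λ_d = ∑_{d : d_i | n + h_i for all i} λ̃_d. -/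

import Mathlib

/-- Tao's observation: if `n + h 0` is a prime exceeding `R`, then the sieve weights built
from `f` and from `f̃` agree, provided `f` and `f̃` are supported on `Δ_k(1)` and have the
same trace on `{t₁ = 0}`.  The sum over divisor tuples `d` with `d i ∣ n + h i` is taken
over tuples of (positive) divisors of `|n + h i|`. -/
theorem sieve_weights_agree (k : ℕ) (hk : 1 ≤ k) (R : ℝ) (hR : 1 < R)
    (f ftilde : (Fin k → ℝ) → ℝ)
    (hfsupp : ∀ t : Fin k → ℝ, (∀ i, 0 ≤ t i) → ¬ (∑ i, t i) ≤ 1 → f t = 0)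
    (hgsupp : ∀ t : Fin k → ℝ, (∀ i, 0 ≤ t i) → ¬ (∑ i, t i) ≤ 1 → ftilde t = 0)
    (hagree : ∀ t : Fin k → ℝ, (∀ i, 0 ≤ t i) → t ⟨0, hk⟩ = 0 → f t = ftilde t)
    (h : Fin k → ℤ) (n : ℕ) (hn : 0 < n)
    (hprime : Prime ((n : ℤ) + h ⟨0, hk⟩))
    (hbig : R < (((n : ℤ) + h ⟨0, hk⟩ : ℤ) : ℝ)) :
    ∑ d ∈ Fintype.piFinset (fun i => ((n : ℤ) + h i).natAbs.divisors),
        (∏ i, (ArithmeticFunction.moebius (d i) : ℝ)) *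
          f (fun i => Real.log (d i) / Real.log R) =
      ∑ d ∈ Fintype.piFinset (fun i => ((n : ℤ) + h i).natAbs.divisors),
        (∏ i, (ArithmeticFunction.moebius (d i) : ℝ)) *
          ftilde (fun i => Real.log (d i) / Real.log R) := by
  apply Finset.sum_congr rfl
  intro d hd
  simp only [Fintype.mem_piFinset] at hd
  set i0 : Fin k := ⟨0, hk⟩ with hi0
  have hlogR : 0 < Real.log R := Real.log_pos hR
  have ht0 : ∀ i, (0:ℝ) ≤ Real.log (d i) / Real.log R := by
    intro i
    apply div_nonneg _ hlogR.le
    apply Real.log_nonneg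
    have := Nat.pos_of_mem_divisors (hd i)
    exact_mod_cast this
  have hd0 := hd i0
  have hpnat : (((n:ℤ) + h i0).natAbs).Prime := Int.prime_iff_natAbs_prime.mp hprime
  rw [hpnat.divisors, Finset.mem_insert, Finset.mem_singleton] at hd0
  rcases hd0 with h1 | hp
  · congr 1
    apply hagree _ ht0
    simp [h1]
  · -- d i0 = |n + h i0| > R, so both f and ftilde vanish
    have hnonneg : (0:ℤ) ≤ (n:ℤ) + h i0 := by
      have h1 : (1:ℝ) < (((n:ℤ) + h i0 : ℤ) : ℝ) := lt_trans hR hbig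
      have : (1:ℤ) < (n:ℤ) + h i0 := by exact_mod_cast h1
      omega
    have hcast : ((((n:ℤ) + h i0).natAbs : ℕ) : ℝ) = (((n:ℤ) + h i0 : ℤ) : ℝ) := by
      rw [Nat.cast_natAbs, abs_of_nonneg hnonneg]
    have hgt : 1 < Real.log (d i0) / Real.log R := by
      rw [hp, hcast]
      rw [one_lt_div hlogR]
      exact Real.log_lt_log (lt_trans one_pos hR) hbig
    have hsum : ¬ (∑ i, Real.log (d i) / Real.log R) ≤ 1 := by
      push_neg
      calc (1:ℝ) < Real.log (d i0) / Real.log R := hgt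
        _ ≤ ∑ i, Real.log (d i) / Real.log R :=
          Finset.single_le_sum (fun i _ => ht0 i) (Finset.mem_univ i0)
    rw [hfsupp _ ht0 hsum, hgsupp _ ht0 hsum]
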